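/- Let k > 0, 0 < ρ < 1/√(2k), and ε > 0 with 2ε²ρ² < 1, and suppose β₀ := ρ [ 1 − 2kρ² − 2kε²ρ⁴/(1 − 2ε²ρ²) ] > 0. Then for all Ξ, Υ ∈ ℝ, the real part of Λ(Ξ) := (iΞ − ρ) · (1 − ε²(iΞ − ρ)²)^{−1} · (1 − (2k + ε²)(iΞ − ρ)² + Υ²(iΞ − ρ)^{−2}) satisfies −Re(Λ(Ξ)) ≥ β₀. -/

import Mathlib

set_option maxHeartbeats 1000000

/-- Uniform spectral bound for the CH-KP symbol in the KP-II scaling: if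
`β₀ = ρ(1 - 2kρ² - 2kε²ρ⁴/(1 - 2ε²ρ²)) > 0`, then `-Re(Λ(Ξ)) ≥ β₀` uniformly in
`Ξ` and the transverse wave number `Υ`. -/
theorem kp_symbol_uniform_bound (k ρ ε : ℝ) (hk : 0 < k) (hρ0 : 0 < ρ)
    (hρ1 : ρ < 1 / Real.sqrt (2 * k)) (hε : 0 < ε) (hsmall : 2 * ε ^ 2 * ρ ^ 2 < 1)
    (hβ : 0 < ρ * (1 - 2 * k * ρ ^ 2 - 2 * k * ε ^ 2 * ρ ^ 4 / (1 - 2 * ε ^ 2 * ρ ^ 2)))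
    (Ξ Υ : ℝ) :
    ρ * (1 - 2 * k * ρ ^ 2 - 2 * k * ε ^ 2 * ρ ^ 4 / (1 - 2 * ε ^ 2 * ρ ^ 2)) ≤
      -((Complex.I * (Ξ : ℂ) - (ρ : ℂ)) *
          (1 - (ε : ℂ) ^ 2 * (Complex.I * (Ξ : ℂ) - (ρ : ℂ)) ^ 2)⁻¹ *
          (1 - ((2 * k : ℝ) + ε ^ 2 : ℝ) * (Complex.I * (Ξ : ℂ) - (ρ : ℂ)) ^ 2 +
            (Υ : ℂ) ^ 2 * ((Complex.I * (Ξ : ℂ) - (ρ : ℂ)) ^ 2)⁻¹)).re := by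
  have h2s : (0:ℝ) < 1 - 2*ε^2*ρ^2 := by linarith
  have hν0 : (Complex.I * (Ξ:ℂ) - (ρ:ℂ)) ≠ 0 := by
    intro h
    have h1 := congrArg Complex.re h
    simp only [Complex.sub_re, Complex.mul_re, Complex.I_re, Complex.I_im,
      Complex.ofReal_re, Complex.ofReal_im, Complex.zero_re, zero_mul, one_mul,
      mul_zero, sub_zero, zero_sub] at h1
    linarith
  have hD0 : ((1:ℂ) - (ε:ℂ)^2 * (Complex.I*(Ξ:ℂ) - (ρ:ℂ))^2) ≠ 0 := by
    have hDc : (1:ℂ) - (ε:ℂ)^2 * (Complex.I*(Ξ:ℂ) - (ρ:ℂ))^2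
        = ((1 - ε^2*(ρ^2 - Ξ^2) : ℝ):ℂ) + ((2*ε^2*ρ*Ξ : ℝ):ℂ) * Complex.I := by
      apply Complex.ext <;> simp [Complex.mul_re, Complex.mul_im, pow_succ] <;> ring
    rw [hDc]; intro h
    have h1 := congrArg Complex.re h
    simp only [Complex.add_re, Complex.mul_re, Complex.ofReal_re, Complex.ofReal_im,
      Complex.I_re, Complex.I_im, Complex.zero_re, mul_zero, mul_one, zero_mul,
      sub_zero, add_zero, zero_add, neg_zero] at h1
    nlinarith [sq_nonneg (ε*Ξ), sq_nonneg (ε*ρ), h1]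
  have hsq0 : ((Complex.I*(Ξ:ℂ) - (ρ:ℂ))^2) ≠ 0 := pow_ne_zero 2 hν0
  have hN : ((Complex.I*(Ξ:ℂ)-(ρ:ℂ))^2 - (((2*k:ℝ) + ε^2 : ℝ):ℂ)*(Complex.I*(Ξ:ℂ)-(ρ:ℂ))^4 + (Υ:ℂ)^2)
      = (((ρ^2 - Ξ^2) - (2*k+ε^2)*((ρ^2-Ξ^2)^2 - 4*ρ^2*Ξ^2) + Υ^2 : ℝ):ℂ)
        + ((-2*ρ*Ξ - (2*k+ε^2)*(-4*ρ*Ξ*(ρ^2-Ξ^2)) : ℝ):ℂ) * Complex.I := by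
    apply Complex.ext <;>
      simp only [pow_succ, pow_zero, one_mul, Complex.add_re, Complex.add_im,
        Complex.sub_re, Complex.sub_im, Complex.mul_re, Complex.mul_im,
        Complex.one_re, Complex.one_im, Complex.ofReal_re, Complex.ofReal_im,
        Complex.I_re, Complex.I_im] <;> ring
  have hW : (Complex.I*(Ξ:ℂ)-(ρ:ℂ)) * ((1:ℂ) - (ε:ℂ)^2*(Complex.I*(Ξ:ℂ)-(ρ:ℂ))^2)
      = ((-ρ - ε^2*(3*Ξ^2*ρ - ρ^3) : ℝ):ℂ) + ((Ξ - ε^2*(3*Ξ*ρ^2 - Ξ^3) : ℝ):ℂ) * Complex.I := by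
    apply Complex.ext <;>
      simp only [pow_succ, pow_zero, one_mul, Complex.add_re, Complex.add_im,
        Complex.sub_re, Complex.sub_im, Complex.mul_re, Complex.mul_im,
        Complex.one_re, Complex.one_im, Complex.ofReal_re, Complex.ofReal_im,
        Complex.I_re, Complex.I_im] <;> ring
  have key : ((Complex.I * (Ξ : ℂ) - (ρ : ℂ)) *
          (1 - (ε : ℂ) ^ 2 * (Complex.I * (Ξ : ℂ) - (ρ : ℂ)) ^ 2)⁻¹ *
          (1 - ((2 * k : ℝ) + ε ^ 2 : ℝ) * (Complex.I * (Ξ : ℂ) - (ρ : ℂ)) ^ 2 +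
            (Υ : ℂ) ^ 2 * ((Complex.I * (Ξ : ℂ) - (ρ : ℂ)) ^ 2)⁻¹))
      = ((((ρ^2 - Ξ^2) - (2*k+ε^2)*((ρ^2-Ξ^2)^2 - 4*ρ^2*Ξ^2) + Υ^2 : ℝ):ℂ)
          + ((-2*ρ*Ξ - (2*k+ε^2)*(-4*ρ*Ξ*(ρ^2-Ξ^2)) : ℝ):ℂ) * Complex.I)
        / (((-ρ - ε^2*(3*Ξ^2*ρ - ρ^3) : ℝ):ℂ) + ((Ξ - ε^2*(3*Ξ*ρ^2 - Ξ^3) : ℝ):ℂ) * Complex.I) := by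
    rw [← hN, ← hW]
    field_simp
  rw [key, Complex.div_re]
  simp only [Complex.add_re, Complex.add_im, Complex.ofReal_re, Complex.ofReal_im,
    Complex.mul_re, Complex.mul_im, Complex.I_re, Complex.I_im, Complex.normSq_apply,
    mul_zero, mul_one, zero_mul, sub_zero, zero_add, zero_sub, add_zero, neg_zero]
  have hWre : -ρ - ε^2*(3*Ξ^2*ρ - ρ^3) < 0 := by
    nlinarith [mul_pos hρ0 h2s, mul_nonneg (sq_nonneg (ε*Ξ)) hρ0.le,
      mul_nonneg (sq_nonneg ε) (pow_nonneg hρ0.le 3)]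
  have hQ : 0 < (-ρ - ε ^ 2 * (3 * Ξ ^ 2 * ρ - ρ ^ 3)) * (-ρ - ε ^ 2 * (3 * Ξ ^ 2 * ρ - ρ ^ 3)) +
      (Ξ - ε ^ 2 * (3 * Ξ * ρ ^ 2 - Ξ ^ 3)) * (Ξ - ε ^ 2 * (3 * Ξ * ρ ^ 2 - Ξ ^ 3)) := by
    nlinarith [mul_pos_of_neg_of_neg hWre hWre,
      mul_self_nonneg (Ξ - ε^2*(3*Ξ*ρ^2 - Ξ^3))]
  have hβval : ρ * (1 - 2 * k * ρ ^ 2 - 2 * k * ε ^ 2 * ρ ^ 4 / (1 - 2 * ε ^ 2 * ρ ^ 2)) =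
      (ρ * ((1 - 2*ε^2*ρ^2) - 2*k*ρ^2*(1 - 2*ε^2*ρ^2) - 2*k*ε^2*ρ^4)) / (1 - 2 * ε ^ 2 * ρ ^ 2) := by
    rw [eq_div_iff (ne_of_gt h2s)]
    linear_combination (-ρ) * div_mul_cancel₀ (2*k*ε^2*ρ^4) (ne_of_gt h2s)
  rw [hβval, ← add_div, ← neg_div, div_le_div_iff₀ h2s hQ]
  have h1e : (0:ℝ) ≤ 1 - ε^2*ρ^2 := by nlinarith [sq_nonneg (ε*ρ)]
  have hP1 : (0:ℝ) ≤ 2*k*ρ*(ρ^2+Ξ^2) * (ε^4*ρ^6*(1 - ε^2*ρ^2)) :=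
    mul_nonneg (by positivity) (mul_nonneg (by positivity) h1e)
  have hP2 : (0:ℝ) ≤ 2*k*ρ*(ρ^2+Ξ^2) *
      (Ξ^2*(3 - 2*(ε^2*ρ^2) - 4*(ε^2*ρ^2)^2 - 2*(ε^2*ρ^2)^3)) := by
    have : (0:ℝ) ≤ 3 - 2*(ε^2*ρ^2) - 4*(ε^2*ρ^2)^2 - 2*(ε^2*ρ^2)^3 := by
      nlinarith [h2s, sq_nonneg (ε*ρ), mul_nonneg h2s.le (sq_nonneg (ε*ρ)),
        mul_nonneg (mul_nonneg h2s.le (sq_nonneg (ε*ρ))) (sq_nonneg (ε*ρ)),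
        sq_nonneg (ε^2*ρ^2)]
    exact mul_nonneg (by positivity) (mul_nonneg (sq_nonneg Ξ) this)
  have hP3 : (0:ℝ) ≤ 2*k*ρ*(ρ^2+Ξ^2) *
      (ε^2*Ξ^4*(1 - (ε^2*ρ^2) - (ε^2*ρ^2)^2)) := by
    have : (0:ℝ) ≤ 1 - (ε^2*ρ^2) - (ε^2*ρ^2)^2 := by
      nlinarith [h2s, sq_nonneg (ε*ρ), mul_nonneg h2s.le (sq_nonneg (ε*ρ))]
    exact mul_nonneg (by positivity) (mul_nonneg (by positivity) this)
  have hP4 : (0:ℝ) ≤ Υ^2*ρ*(1 - 2*ε^2*ρ^2)*(1 + 3*ε^2*Ξ^2 - ε^2*ρ^2) := by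
    have h4 : (0:ℝ) ≤ 1 + 3*ε^2*Ξ^2 - ε^2*ρ^2 := by
      nlinarith [sq_nonneg (ε*Ξ), sq_nonneg (ε*ρ)]
    exact mul_nonneg (mul_nonneg (mul_nonneg (sq_nonneg Υ) hρ0.le) h2s.le) h4
  nlinarith [hP1, hP2, hP3, hP4]
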